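/- Let k₀ ≥ 1 be an integer, ε₀ ∈ (0,1), p_1,…,p_{k₀} ≥ 0 with ∑_{k=1}^{k₀} p_k = 1, and let g_1,…,g_{k₀} be Borel probability measures on ℝ with g_k((0,∞)) ≥ 1 − ε₀ for each k. Let u, v : ℝ → [0,1] with u nonincreasing, and suppose that ∑_{k=1}^{k₀} p_k·∫_ℝ Q_{1,k}(u(x − y)) dg_k(y) ≤ v(x) for all x ∈ ℝ, where Q_{1,k}(u) = 1 − (1−u)^k. Then for all x ∈ ℝ: ∑_{k=1}^{k₀} p_k·Q_{1,k}(u(x)) ≤ v(x)/(1 − ε₀); in particular u(x) ≤ v(x)/(1 − ε₀). -/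

import Mathlib

open MeasureTheory Set

/-- Let `k₀ ≥ 1`, `ε₀ ∈ (0,1)`, `p_1,…,p_{k₀} ≥ 0` with `∑ p_k = 1`, and
let `g_1,…,g_{k₀}` be Borel probability measures on `ℝ` with `g_k((0,∞)) ≥ 1 − ε₀`.
Let `u, v : ℝ → [0,1]` with `u` nonincreasing satisfy
`∑_k p_k·∫ Q_{1,k}(u(x−y)) dg_k(y) ≤ v(x)` for all `x`, where `Q_{1,k}(u) = 1 − (1−u)^k`.
Then for all `x`: `∑_k p_k·Q_{1,k}(u(x)) ≤ v(x)/(1−ε₀)`; in particular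
`u(x) ≤ v(x)/(1−ε₀)`. -/
theorem stmt_18
    (k₀ : ℕ) (hk₀ : 1 ≤ k₀)
    (ε₀ : ℝ) (hε₀ : ε₀ ∈ Ioo (0 : ℝ) 1)
    (p : ℕ → ℝ) (hp : ∀ k ∈ Finset.Icc 1 k₀, 0 ≤ p k)
    (hpsum : ∑ k ∈ Finset.Icc 1 k₀, p k = 1)
    (g : ℕ → Measure ℝ) (hg : ∀ k, IsProbabilityMeasure (g k))
    (hgtail : ∀ k ∈ Finset.Icc 1 k₀, 1 - ε₀ ≤ ((g k) (Ioi (0 : ℝ))).toReal)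
    (u v : ℝ → ℝ)
    (hu01 : ∀ x, u x ∈ Icc (0 : ℝ) 1) (hv01 : ∀ x, v x ∈ Icc (0 : ℝ) 1)
    (huanti : Antitone u)
    (hlb : ∀ x : ℝ,
      ∑ k ∈ Finset.Icc 1 k₀, p k * ∫ y : ℝ, (1 - (1 - u (x - y)) ^ k) ∂(g k) ≤ v x) :
    ∀ x : ℝ,
      (∑ k ∈ Finset.Icc 1 k₀, p k * (1 - (1 - u x) ^ k)) ≤ v x / (1 - ε₀) ∧
      u x ≤ v x / (1 - ε₀) := by
  intro x
  have hεlt : (0:ℝ) < 1 - ε₀ := by linarith [hε₀.2]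
  have humeas : Measurable u := huanti.measurable
  -- key per-k integral bound
  have key : ∀ k ∈ Finset.Icc 1 k₀,
      (1 - ε₀) * (1 - (1 - u x) ^ k) ≤ ∫ y : ℝ, (1 - (1 - u (x - y)) ^ k) ∂(g k) := by
    intro k hk
    obtain ⟨hk1, hkk₀⟩ := Finset.mem_Icc.mp hk
    haveI := hg k
    set f : ℝ → ℝ := fun y => 1 - (1 - u (x - y)) ^ k with hf
    have hfmeas : Measurable f := by
      apply Measurable.const_sub
      exact ((humeas.comp (measurable_const.sub measurable_id)).const_sub 1).pow_const k
    have hf01 : ∀ y, f y ∈ Icc (0:ℝ) 1 := by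
      intro y
      have h := hu01 (x - y)
      constructor
      · have : (1 - u (x - y)) ^ k ≤ 1 ^ k :=
          pow_le_pow_left₀ (by linarith [h.2]) (by linarith [h.1]) k
        rw [one_pow] at this; simp only [f]; linarith
      · have : (0:ℝ) ≤ (1 - u (x - y)) ^ k := pow_nonneg (by linarith [h.2]) k
        simp [f]; linarith
    have hint : Integrable f (g k) := by
      apply Integrable.mono' (integrable_const (1:ℝ)) hfmeas.aestronglyMeasurable
      filter_upwards with y
      rw [Real.norm_eq_abs, abs_le]
      exact ⟨by linarith [(hf01 y).1], (hf01 y).2⟩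
    set c : ℝ := 1 - (1 - u x) ^ k with hc
    have hc0 : 0 ≤ c := by
      have h := hu01 x
      have : (1 - u x) ^ k ≤ 1 ^ k :=
        pow_le_pow_left₀ (by linarith [h.2]) (by linarith [h.1]) k
      rw [one_pow] at this; simp only [c]; linarith
    have hmin : ∀ y ∈ Ioi (0:ℝ), c ≤ f y := by
      intro y hy
      have : u x ≤ u (x - y) := huanti (by linarith [mem_Ioi.mp hy])
      have h2 := (hu01 (x - y)).2
      have : (1 - u (x - y)) ^ k ≤ (1 - u x) ^ k :=
        pow_le_pow_left₀ (by linarith) (by linarith) k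
      simp only [f, c]; linarith
    calc (1 - ε₀) * c ≤ ((g k) (Ioi (0:ℝ))).toReal * c :=
          mul_le_mul_of_nonneg_right (hgtail k hk) hc0
      _ = ∫ _ in Ioi (0:ℝ), c ∂(g k) := by
          rw [setIntegral_const, smul_eq_mul]; rfl
      _ ≤ ∫ y in Ioi (0:ℝ), f y ∂(g k) := by
          apply setIntegral_mono_on (integrableOn_const (measure_ne_top _ _))
            (hint.integrableOn) measurableSet_Ioi hmin
      _ ≤ ∫ y, f y ∂(g k) := by
          apply setIntegral_le_integral hint
          filter_upwards with y using (hf01 y).1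
  have hsum : (1 - ε₀) * ∑ k ∈ Finset.Icc 1 k₀, p k * (1 - (1 - u x) ^ k) ≤ v x := by
    calc (1 - ε₀) * ∑ k ∈ Finset.Icc 1 k₀, p k * (1 - (1 - u x) ^ k)
        = ∑ k ∈ Finset.Icc 1 k₀, p k * ((1 - ε₀) * (1 - (1 - u x) ^ k)) := by
          rw [Finset.mul_sum]; apply Finset.sum_congr rfl; intros; ring
      _ ≤ ∑ k ∈ Finset.Icc 1 k₀, p k * ∫ y : ℝ, (1 - (1 - u (x - y)) ^ k) ∂(g k) := by
          apply Finset.sum_le_sum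
          intro k hk
          exact mul_le_mul_of_nonneg_left (key k hk) (hp k hk)
      _ ≤ v x := hlb x
  have h1 : ∑ k ∈ Finset.Icc 1 k₀, p k * (1 - (1 - u x) ^ k) ≤ v x / (1 - ε₀) := by
    rw [le_div_iff₀ hεlt]
    linarith [hsum]
  refine ⟨h1, le_trans ?_ h1⟩
  -- u x ≤ ∑ p_k Q_k(u x)
  have hux := hu01 x
  calc u x = ∑ k ∈ Finset.Icc 1 k₀, p k * u x := by
        rw [← Finset.sum_mul, hpsum, one_mul]
    _ ≤ ∑ k ∈ Finset.Icc 1 k₀, p k * (1 - (1 - u x) ^ k) := by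
        apply Finset.sum_le_sum
        intro k hk
        apply mul_le_mul_of_nonneg_left _ (hp k hk)
        have hk1 := (Finset.mem_Icc.mp hk).1
        have : (1 - u x) ^ k ≤ (1 - u x) ^ 1 :=
          pow_le_pow_of_le_one (by linarith [hux.2]) (by linarith [hux.1]) hk1
        simpa using by linarith
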